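/- arXiv:1804.02800 — 2 statements merged into one kernel-verified Lean document; each statement's English description precedes it below -/
import Mathlib

section
/- (Theorem 4, exact form) For every N ≥ 1 and p ∈ (0,1), the Shannon entropy of the unlabeled bipartite graph distribution satisfies H_Bu(N,p) = N²·H(p) − 2·log₂(N!) + Σ_ω P̄(ω)·log₂|Aut_u(ω)|, where the sum ranges over all equivalence classes ω under simultaneous row-and-column permutation, P̄(ω) is the probability of ω under the pushforward distribution, and |Aut_u(ω)| is the common size of the stabilizer {(σ,τ) : ∀ i j, A (σ i) (τ j) = A i j} of matrices A in ω. -/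
open Finset

attribute [local instance] Classical.propDecidable

noncomputable section

/-- Equivalence of adjacency matrices under simultaneous row and column permutations
(both vertex parts unlabeled, the two parts remaining distinguishable). -/
def biRelSetoid (N : ℕ) : Setoid (Fin N → Fin N → Bool) where
  r A B := ∃ σ τ : Equiv.Perm (Fin N), ∀ i j, A (σ i) (τ j) = B i j
  iseqv := by
    refine ⟨fun A => ⟨1, 1, fun i j => rfl⟩, ?_, ?_⟩
    · rintro A B ⟨σ, τ, h⟩
      refine ⟨σ⁻¹, τ⁻¹, fun i j => ?_⟩
      rw [← h (σ⁻¹ i) (τ⁻¹ j), Equiv.Perm.coe_inv, Equiv.Perm.coe_inv, Equiv.apply_symm_apply,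
        Equiv.apply_symm_apply]
    · rintro A B C ⟨σ, τ, h⟩ ⟨σ', τ', h'⟩
      refine ⟨σ * σ', τ * τ', fun i j => ?_⟩
      rw [Equiv.Perm.mul_apply, Equiv.Perm.mul_apply, h (σ' i) (τ' j), h' i j]

instance (N : ℕ) : Fintype (Quotient (biRelSetoid N)) := Fintype.ofFinite _

/-- Number of `true` entries (edges) of an adjacency matrix. -/
def edgeCount {N : ℕ} (A : Fin N → Fin N → Bool) : ℕ :=
  (univ.filter fun ij : Fin N × Fin N => A ij.1 ij.2 = true).card

/-- Probability of a fixed adjacency matrix under i.i.d. Bernoulli(p) entries. -/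
def matProb (N : ℕ) (p : ℝ) (A : Fin N → Fin N → Bool) : ℝ :=
  p ^ edgeCount A * (1 - p) ^ (N ^ 2 - edgeCount A)

/-- Pushforward probability of a class: the unlabeled bipartite graph distribution. -/
def classProbU (N : ℕ) (p : ℝ) (ω : Quotient (biRelSetoid N)) : ℝ :=
  ∑ A : Fin N → Fin N → Bool,
    if Quotient.mk (biRelSetoid N) A = ω then matProb N p A else 0

/-- Shannon entropy (base 2) of the unlabeled bipartite graph distribution. -/
def HBu (N : ℕ) (p : ℝ) : ℝ :=
  ∑ ω : Quotient (biRelSetoid N), -(classProbU N p ω * Real.logb 2 (classProbU N p ω))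

/-- Binary entropy function, base 2. -/
def binEnt (p : ℝ) : ℝ := -(p * Real.logb 2 p) - (1 - p) * Real.logb 2 (1 - p)

/-- Size of the stabilizer `{(σ,τ) : ∀ i j, A (σ i) (τ j) = A i j}` of a matrix. -/
def autUCard {N : ℕ} (A : Fin N → Fin N → Bool) : ℕ :=
  Fintype.card
    {στ : Equiv.Perm (Fin N) × Equiv.Perm (Fin N) // ∀ i j, A (στ.1 i) (στ.2 j) = A i j}

-- ==== aux ====
variable {N : ℕ} {p : ℝ}

private def bw (p : ℝ) (b : Bool) : ℝ := if b then p else 1 - p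

private lemma edgeCount_le (A : Fin N → Fin N → Bool) : edgeCount A ≤ N ^ 2 := by
  have h := Finset.card_filter_le (univ : Finset (Fin N × Fin N))
      (fun ij => A ij.1 ij.2 = true)
  simpa [edgeCount, Finset.card_univ, sq] using h

private lemma edgeCount_cast (A : Fin N → Fin N → Bool) :
    (edgeCount A : ℝ) = ∑ ij : Fin N × Fin N, (if A ij.1 ij.2 then (1 : ℝ) else 0) := by
  simp [edgeCount]

private lemma matProb_eq_prod (A : Fin N → Fin N → Bool) :
    matProb N p A = ∏ ij : Fin N × Fin N, bw p (A ij.1 ij.2) := by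
  have h1 : ∀ x ∈ univ.filter (fun ij : Fin N × Fin N => A ij.1 ij.2 = true),
      bw p (A x.1 x.2) = p := by
    intro x hx; simp only [mem_filter] at hx; simp [bw, hx.2]
  have h2 : ∀ x ∈ univ.filter (fun ij : Fin N × Fin N => ¬(A ij.1 ij.2 = true)),
      bw p (A x.1 x.2) = 1 - p := by
    intro x hx; simp only [mem_filter] at hx; simp [bw, hx.2]
  have hcard : (univ.filter fun ij : Fin N × Fin N => ¬(A ij.1 ij.2 = true)).card
      = N ^ 2 - edgeCount A := by
    have h := Finset.card_filter_add_card_filter_not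
      (s := (univ : Finset (Fin N × Fin N)))
      (p := fun ij : Fin N × Fin N => A ij.1 ij.2 = true)
    simp only [Finset.card_univ, Fintype.card_prod, Fintype.card_fin] at h
    unfold edgeCount
    rw [pow_two]
    omega
  rw [← Finset.prod_filter_mul_prod_filter_not univ
      (fun ij : Fin N × Fin N => A ij.1 ij.2 = true),
    Finset.prod_congr rfl h1, Finset.prod_congr rfl h2, Finset.prod_const,
    Finset.prod_const, hcard]
  rfl

private lemma sum_pick (f : Fin N × Fin N → Bool → ℝ) :
    ∑ A : Fin N → Fin N → Bool, ∏ ij : Fin N × Fin N, f ij (A ij.1 ij.2)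
      = ∏ ij : Fin N × Fin N, (f ij true + f ij false) := by
  have h := Finset.prod_univ_sum (fun _ : Fin N × Fin N => (univ : Finset Bool)) f
  rw [Fintype.piFinset_univ] at h
  rw [← Fintype.sum_equiv (Equiv.curry (Fin N) (Fin N) Bool)
      (fun B => ∏ ij : Fin N × Fin N, f ij (B ij))
      (fun A => ∏ ij : Fin N × Fin N, f ij (A ij.1 ij.2)) (fun B => rfl), ← h]
  refine Finset.prod_congr rfl fun ij _ => ?_
  simp

private lemma sum_matProb : ∑ A : Fin N → Fin N → Bool, matProb N p A = 1 := by
  simp only [matProb_eq_prod]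
  rw [sum_pick]
  simp [bw]

private lemma sum_matProb_ind (a₀ : Fin N × Fin N) :
    ∑ A : Fin N → Fin N → Bool,
      matProb N p A * (if A a₀.1 a₀.2 then (1 : ℝ) else 0) = p := by
  have key : ∀ A : Fin N → Fin N → Bool,
      matProb N p A * (if A a₀.1 a₀.2 then (1 : ℝ) else 0)
        = ∏ ij : Fin N × Fin N,
            (if ij = a₀ then (if A ij.1 ij.2 then p else 0) else bw p (A ij.1 ij.2)) := by
    intro A
    rw [matProb_eq_prod, ← Finset.mul_prod_erase univ _ (Finset.mem_univ a₀),
      ← Finset.mul_prod_erase univ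
        (fun ij : Fin N × Fin N =>
          (if ij = a₀ then (if A ij.1 ij.2 then p else 0) else bw p (A ij.1 ij.2)))
        (Finset.mem_univ a₀)]
    rw [if_pos rfl]
    rw [Finset.prod_congr rfl (fun x hx => if_neg (Finset.mem_erase.1 hx).1)]
    by_cases h : A a₀.1 a₀.2 <;> simp [bw, h] <;> ring
  simp only [key]
  have h := sum_pick (N := N) (fun ij b =>
    if ij = a₀ then (if b then p else 0) else bw p b)
  rw [h]
  rw [Finset.prod_congr rfl (g := fun ij : Fin N × Fin N => if ij = a₀ then p else 1)
    (fun ij _ => by by_cases h : ij = a₀ <;> simp [h, bw])]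
  rw [Finset.prod_ite_eq' univ a₀ (fun _ => p)]
  simp

private lemma sum_matProb_edge :
    ∑ A : Fin N → Fin N → Bool, matProb N p A * (edgeCount A : ℝ) = (N : ℝ) ^ 2 * p := by
  simp only [edgeCount_cast, Finset.mul_sum]
  rw [Finset.sum_comm]
  rw [Finset.sum_congr rfl (fun ij _ => sum_matProb_ind ij)]
  simp [Finset.card_univ, sq]


private lemma matProb_pos (hp0 : 0 < p) (hp1 : p < 1) (A : Fin N → Fin N → Bool) :
    0 < matProb N p A :=
  mul_pos (pow_pos hp0 _) (pow_pos (by linarith) _)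

private lemma logb_matProb (hp0 : 0 < p) (hp1 : p < 1) (A : Fin N → Fin N → Bool) :
    Real.logb 2 (matProb N p A)
      = (edgeCount A : ℝ) * Real.logb 2 p
        + ((N : ℝ) ^ 2 - (edgeCount A : ℝ)) * Real.logb 2 (1 - p) := by
  unfold matProb
  rw [Real.logb_mul (pow_ne_zero _ hp0.ne') (pow_ne_zero _ (by linarith)),
    Real.logb_pow, Real.logb_pow]
  have : ((N ^ 2 - edgeCount A : ℕ) : ℝ) = (N : ℝ) ^ 2 - (edgeCount A : ℝ) := by
    rw [Nat.cast_sub (edgeCount_le A)]; push_cast; ring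
  rw [this]

private lemma labeled_entropy (hp0 : 0 < p) (hp1 : p < 1) :
    ∑ A : Fin N → Fin N → Bool, matProb N p A * Real.logb 2 (matProb N p A)
      = -((N : ℝ) ^ 2 * binEnt p) := by
  simp only [logb_matProb hp0 hp1]
  have expand : ∀ A : Fin N → Fin N → Bool,
      matProb N p A * ((edgeCount A : ℝ) * Real.logb 2 p
          + ((N : ℝ) ^ 2 - (edgeCount A : ℝ)) * Real.logb 2 (1 - p))
        = (matProb N p A * (edgeCount A : ℝ)) * (Real.logb 2 p - Real.logb 2 (1 - p))
          + matProb N p A * ((N : ℝ) ^ 2 * Real.logb 2 (1 - p)) := fun A => by ring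
  rw [Finset.sum_congr rfl (fun A _ => expand A), Finset.sum_add_distrib,
    ← Finset.sum_mul, ← Finset.sum_mul, sum_matProb_edge, sum_matProb]
  unfold binEnt; ring

private lemma edgeCount_rel {A B : Fin N → Fin N → Bool} (σ τ : Equiv.Perm (Fin N))
    (h : ∀ i j, A (σ i) (τ j) = B i j) : edgeCount B = edgeCount A := by
  unfold edgeCount
  refine Finset.card_bij' (fun ij _ => (σ ij.1, τ ij.2)) (fun ij _ => (σ⁻¹ ij.1, τ⁻¹ ij.2))
    ?_ ?_ ?_ ?_
  · intro a ha
    simp only [mem_filter, mem_univ, true_and] at ha ⊢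
    rw [h]; exact ha
  · intro a ha
    simp only [mem_filter, mem_univ, true_and] at ha ⊢
    rw [← h (σ⁻¹ a.1) (τ⁻¹ a.2)]
    simpa using ha
  · intro a _; simp
  · intro a _; simp

private lemma matProb_rel {A B : Fin N → Fin N → Bool} (h : (biRelSetoid N).r A B) :
    matProb N p A = matProb N p B := by
  obtain ⟨σ, τ, h⟩ := h
  unfold matProb
  rw [edgeCount_rel σ τ h]

set_option synthInstance.maxHeartbeats 1000000 in
instance (priority := 2000) biAct (N : ℕ) :
    MulAction (Equiv.Perm (Fin N) × Equiv.Perm (Fin N)) (Fin N → Fin N → Bool) where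
  smul g A := fun i j => A (g.1⁻¹ i) (g.2⁻¹ j)
  one_smul A := by funext i j; show A _ _ = A i j; simp
  mul_smul x y A := by
    funext i j
    show A ((x * y).1⁻¹ i) ((x * y).2⁻¹ j) = A (y.1⁻¹ (x.1⁻¹ i)) (y.2⁻¹ (x.2⁻¹ j))
    simp [mul_inv_rev]

set_option synthInstance.maxHeartbeats 1000000 in
private lemma smul_def (g : Equiv.Perm (Fin N) × Equiv.Perm (Fin N))
    (A : Fin N → Fin N → Bool) (i j : Fin N) : (g • A) i j = A (g.1⁻¹ i) (g.2⁻¹ j) := rfl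

set_option synthInstance.maxHeartbeats 1000000 in
private lemma mem_orbit_iff' {A B : Fin N → Fin N → Bool} :
    B ∈ MulAction.orbit (Equiv.Perm (Fin N) × Equiv.Perm (Fin N)) A
      ↔ (biRelSetoid N).r A B := by
  constructor
  · rintro ⟨⟨σ, τ⟩, rfl⟩
    exact ⟨σ⁻¹, τ⁻¹, fun i j => rfl⟩
  · rintro ⟨σ, τ, h⟩
    refine ⟨(σ⁻¹, τ⁻¹), ?_⟩
    show (σ⁻¹, τ⁻¹) • A = B
    funext i j
    rw [smul_def]
    simpa using h i j

set_option synthInstance.maxHeartbeats 1000000 in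
private lemma stab_card (A : Fin N → Fin N → Bool) :
    Fintype.card
        (MulAction.stabilizer (Equiv.Perm (Fin N) × Equiv.Perm (Fin N)) A) = autUCard A := by
  apply Fintype.card_congr
  refine ⟨fun s => ⟨(s.1.1⁻¹, s.1.2⁻¹), fun i j => ?_⟩,
    fun t => ⟨(t.1.1⁻¹, t.1.2⁻¹), ?_⟩, fun s => ?_, fun t => ?_⟩
  · have hs : s.1 • A = A := s.2
    have := congrFun (congrFun hs i) j
    rw [smul_def] at this
    exact this
  · have ht := t.2
    show (t.1.1⁻¹, t.1.2⁻¹) ∈ MulAction.stabilizer _ A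
    rw [MulAction.mem_stabilizer_iff]
    funext i j
    rw [smul_def]
    simpa using ht i j
  · ext : 2 <;> simp
  · ext : 2 <;> simp

set_option synthInstance.maxHeartbeats 1000000 in
private lemma fiber_card (ω : Quotient (biRelSetoid N)) :
    ((univ.filter fun A : Fin N → Fin N → Bool =>
        Quotient.mk (biRelSetoid N) A = ω).card) * autUCard ω.out = N.factorial ^ 2 := by
  classical
  set A₀ := ω.out with hA₀
  have hset : (univ.filter fun A : Fin N → Fin N → Bool =>
        Quotient.mk (biRelSetoid N) A = ω)
      = (MulAction.orbit (Equiv.Perm (Fin N) × Equiv.Perm (Fin N)) A₀).toFinset := by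
    ext B
    simp only [mem_filter, mem_univ, true_and, Set.mem_toFinset]
    rw [mem_orbit_iff']
    constructor
    · intro hB
      have hq : Quotient.mk (biRelSetoid N) A₀ = Quotient.mk (biRelSetoid N) B := by
        rw [hB, hA₀, Quotient.out_eq]
      exact Quotient.exact hq
    · intro h
      rw [← Quotient.out_eq ω, ← hA₀]
      exact Quotient.sound ((biRelSetoid N).iseqv.symm h)
  rw [hset, Set.toFinset_card, ← stab_card A₀,
    MulAction.card_orbit_mul_card_stabilizer_eq_card_group, Fintype.card_prod,
    Fintype.card_perm, Fintype.card_fin, sq]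

private lemma classProbU_eq (ω : Quotient (biRelSetoid N)) :
    classProbU N p ω
      = ((univ.filter fun A : Fin N → Fin N → Bool =>
          Quotient.mk (biRelSetoid N) A = ω).card : ℝ) * matProb N p ω.out := by
  unfold classProbU
  rw [← Finset.sum_filter]
  have hconst : ∀ A ∈ (univ.filter fun A : Fin N → Fin N → Bool =>
      Quotient.mk (biRelSetoid N) A = ω), matProb N p A = matProb N p ω.out := by
    intro A hA
    have hq : Quotient.mk (biRelSetoid N) A = Quotient.mk (biRelSetoid N) ω.out := by
      rw [(mem_filter.1 hA).2, Quotient.out_eq]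
    exact matProb_rel (Quotient.exact hq)
  rw [Finset.sum_congr rfl hconst, Finset.sum_const, nsmul_eq_mul]

private lemma sum_classProbU : ∑ ω : Quotient (biRelSetoid N), classProbU N p ω = 1 := by
  unfold classProbU
  rw [Finset.sum_comm]
  have h : ∀ A : Fin N → Fin N → Bool,
      ∑ ω : Quotient (biRelSetoid N),
        (if Quotient.mk (biRelSetoid N) A = ω then matProb N p A else 0) = matProb N p A := by
    intro A
    simp [Finset.sum_ite_eq]
  rw [Finset.sum_congr rfl (fun A _ => h A), sum_matProb]

private lemma sum_classProbU_logm :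
    ∑ ω : Quotient (biRelSetoid N),
        classProbU N p ω * Real.logb 2 (matProb N p ω.out)
      = ∑ A : Fin N → Fin N → Bool, matProb N p A * Real.logb 2 (matProb N p A) := by
  unfold classProbU
  simp only [Finset.sum_mul, ite_mul, zero_mul]
  rw [Finset.sum_comm]
  refine Finset.sum_congr rfl fun A _ => ?_
  rw [Finset.sum_ite_eq]
  simp only [mem_univ, if_true]
  have h : matProb N p ((Quotient.mk (biRelSetoid N) A).out) = matProb N p A :=
    matProb_rel (Quotient.mk_out A)
  rw [h]

private lemma classProbU_pos (hp0 : 0 < p) (hp1 : p < 1) (ω : Quotient (biRelSetoid N)) :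
    0 < classProbU N p ω := by
  rw [classProbU_eq]
  have hmem : ω.out ∈ (univ.filter fun A : Fin N → Fin N → Bool =>
      Quotient.mk (biRelSetoid N) A = ω) := by
    simp [Quotient.out_eq]
  exact mul_pos (by exact_mod_cast Finset.card_pos.2 ⟨ω.out, hmem⟩)
    (matProb_pos hp0 hp1 _)

private lemma autUCard_pos (A : Fin N → Fin N → Bool) : 0 < autUCard A :=
  Fintype.card_pos_iff.2 ⟨⟨(1, 1), fun i j => rfl⟩⟩


/-- Theorem 4 (exact form): the entropy of the unlabeled bipartite graph distribution
satisfies `H_Bu(N,p) = N²·H(p) − 2·log₂(N!) + Σ_ω P̄(ω)·log₂|Aut_u(ω)|`. -/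
theorem unlabeled_entropy_exact (N : ℕ) (hN : 1 ≤ N) (p : ℝ)
    (hp0 : 0 < p) (hp1 : p < 1) :
    HBu N p =
      (N : ℝ) ^ 2 * binEnt p - 2 * Real.logb 2 (N.factorial : ℝ)
        + ∑ ω : Quotient (biRelSetoid N),
            classProbU N p ω * Real.logb 2 ((autUCard (Quotient.out ω) : ℝ)) := by
  have key : ∀ ω : Quotient (biRelSetoid N),
      -(classProbU N p ω * Real.logb 2 (classProbU N p ω))
        = classProbU N p ω * Real.logb 2 ((autUCard (Quotient.out ω) : ℝ))
          - classProbU N p ω * (2 * Real.logb 2 (N.factorial : ℝ))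
          - classProbU N p ω * Real.logb 2 (matProb N p ω.out) := by
    intro ω
    set c : ℕ := (univ.filter fun A : Fin N → Fin N → Bool =>
      Quotient.mk (biRelSetoid N) A = ω).card with hc
    have hmem : ω.out ∈ (univ.filter fun A : Fin N → Fin N → Bool =>
        Quotient.mk (biRelSetoid N) A = ω) := by simp [Quotient.out_eq]
    have hcpos : 0 < c := Finset.card_pos.2 ⟨ω.out, hmem⟩
    have hapos : 0 < autUCard ω.out := autUCard_pos _
    have hmpos : 0 < matProb N p ω.out := matProb_pos hp0 hp1 _
    have hP : classProbU N p ω = (c : ℝ) * matProb N p ω.out := classProbU_eq ω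
    have hca : (c : ℝ) * (autUCard ω.out : ℝ) = ((N.factorial : ℝ)) ^ 2 := by
      exact_mod_cast fiber_card ω
    have hcR : (0:ℝ) < (c : ℝ) := by exact_mod_cast hcpos
    have haR : (0:ℝ) < (autUCard ω.out : ℝ) := by exact_mod_cast hapos
    have hfR : (0:ℝ) < (N.factorial : ℝ) := by
      exact_mod_cast Nat.factorial_pos N
    have hlogc : Real.logb 2 (c : ℝ)
        = 2 * Real.logb 2 (N.factorial : ℝ) - Real.logb 2 ((autUCard ω.out : ℝ)) := by
      have h1 : Real.logb 2 ((c : ℝ) * (autUCard ω.out : ℝ))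
          = Real.logb 2 (((N.factorial : ℝ)) ^ 2) := by rw [hca]
      rw [Real.logb_mul hcR.ne' haR.ne', Real.logb_pow] at h1
      push_cast at h1 ⊢
      linarith
    rw [hP, Real.logb_mul hcR.ne' hmpos.ne', hlogc]
    ring
  unfold HBu
  rw [Finset.sum_congr rfl (fun ω _ => key ω), Finset.sum_sub_distrib,
    Finset.sum_sub_distrib, ← Finset.sum_mul, sum_classProbU, sum_classProbU_logm,
    labeled_entropy hp0 hp1]
  ring
end
end

section
/- (Appendix, Lemma 10) Let p : ℕ → ℝ satisfy 0 < p(N) < 1 for all N, N·p(N)/ln N → ∞, and N·(1−p(N))/ln N → ∞ as N → ∞. For each N let Sym_u(N) be the probability that a random matrix A : Fin N → Fin N → Bool with i.i.d. Bernoulli(p(N)) entries admits a pair of permutations (σ, τ) of Fin N, not both the identity, with A (σ i) (τ j) = A i j for all i, j (i.e., the unlabeled bipartite graph is symmetric). Then for every constant w > 0, N^w · Sym_u(N) → 0 as N → ∞; that is, Sym_u(N) = O(N^{−w}) for every positive constant w. -/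
open Finset

attribute [local instance] Classical.propDecidable

noncomputable section

/-- Probability that the random unlabeled bipartite graph is symmetric, i.e. that its
stabilizer contains a pair of permutations `(σ, τ)`, not both the identity, with
`A (σ i) (τ j) = A i j` for all `i, j`. -/
def symProbU (N : ℕ) (p : ℝ) : ℝ :=
  ∑ A : Fin N → Fin N → Bool,
    if ∃ στ : Equiv.Perm (Fin N) × Equiv.Perm (Fin N),
        στ ≠ (1, 1) ∧ ∀ i j, A (στ.1 i) (στ.2 j) = A i j then
      matProb N p A
    else 0

lemma exists_indep {X : Type*} [Fintype X] [DecidableEq X] (g : Equiv.Perm X) :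
    ∃ S : Finset X, (∀ s ∈ S, g⁻¹ s ∉ S) ∧
      (univ.filter fun x => g x ≠ x).card ≤ 3 * S.card := by
  classical
  set D := univ.filter fun x => g x ≠ x with hD
  obtain ⟨S, hSmem, hSmax⟩ := Finset.exists_max_image
      ((D.powerset).filter fun S => ∀ s ∈ S, g⁻¹ s ∉ S) Finset.card ⟨∅, by simp⟩
  simp only [Finset.mem_filter, Finset.mem_powerset] at hSmem
  obtain ⟨hSD, hSind⟩ := hSmem
  refine ⟨S, hSind, ?_⟩
  have hcov : D ⊆ S ∪ S.image g ∪ S.image (g⁻¹ : Equiv.Perm X) := by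
    intro x hxD
    by_contra hx
    simp only [Finset.mem_union, Finset.mem_image, not_or, not_exists] at hx
    obtain ⟨⟨hx1, hx2⟩, hx3⟩ := hx
    push_neg at hx2 hx3
    have hins : insert x S ∈ (D.powerset).filter fun S => ∀ s ∈ S, g⁻¹ s ∉ S := by
      simp only [Finset.mem_filter, Finset.mem_powerset]
      constructor
      · exact Finset.insert_subset hxD hSD
      · intro s hs
        intro hmem
        rcases Finset.mem_insert.1 hs with rfl | hs' <;>
          rcases Finset.mem_insert.1 hmem with h99 | hmem'
        · have hne : g s ≠ s := by
            have := (Finset.mem_filter.1 hxD).2; exact this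
          apply hne
          have : g (g⁻¹ s) = g s := congrArg g h99
          simpa using this.symm
        · exact hx2 _ hmem' (by simp)
        · exact hx3 _ hs' h99
        · exact hSind s hs' hmem'
    have := hSmax _ hins
    have : (insert x S).card ≤ S.card := this
    rw [Finset.card_insert_of_notMem hx1] at this
    omega
  calc D.card ≤ (S ∪ S.image g ∪ S.image (g⁻¹ : Equiv.Perm X)).card := Finset.card_le_card hcov
    _ ≤ (S ∪ S.image g).card + (S.image (g⁻¹ : Equiv.Perm X)).card := Finset.card_union_le _ _
    _ ≤ S.card + (S.image g).card + (S.image (g⁻¹ : Equiv.Perm X)).card := by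
        have := Finset.card_union_le S (S.image g); omega
    _ ≤ 3 * S.card := by
        have h1 := Finset.card_image_le (s := S) (f := g)
        have h2 := Finset.card_image_le (s := S) (f := (g⁻¹ : Equiv.Perm X))
        omega

lemma sum_prod_fun {X : Type*} [Fintype X] [DecidableEq X] (u : X → Bool → ℝ) :
    ∑ C : X → Bool, ∏ x, u x (C x) = ∏ x, (u x true + u x false) := by
  classical
  have h := Finset.prod_univ_sum (fun _ : X => (Finset.univ : Finset Bool)) u
  rw [Fintype.piFinset_univ] at h
  rw [← h]
  refine Finset.prod_congr rfl fun x _ => ?_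
  rw [Fintype.sum_bool]

lemma sum_invariant_le {X : Type*} [Fintype X] [DecidableEq X]
    (w : X → Bool → ℝ) (q : ℝ) (hq0 : 0 ≤ q)
    (hw0 : ∀ x b, 0 ≤ w x b) (hwq : ∀ x b, w x b ≤ q)
    (hw1 : ∀ x, w x true + w x false = 1)
    (g : Equiv.Perm X) (S : Finset X) (hS : ∀ s ∈ S, g⁻¹ s ∉ S) :
    (∑ C : X → Bool, if ∀ x, C (g x) = C x then ∏ x, w x (C x) else 0) ≤ q ^ S.card := by
  classical
  set E : Finset (X → Bool) := Finset.univ.filter (fun C => ∀ x, C (g x) = C x) with hE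
  have hrw : (∑ C : X → Bool, if ∀ x, C (g x) = C x then ∏ x, w x (C x) else 0)
      = ∑ C ∈ E, ∏ x, w x (C x) := (Finset.sum_filter _ _).symm
  rw [hrw]
  set G : (X → Bool) → ℝ := fun C => ∏ x ∈ Sᶜ, w x (C x) with hG
  have hstep1 : ∀ C ∈ E, ∏ x, w x (C x) ≤ q ^ S.card * G C := by
    intro C _
    rw [← Finset.prod_mul_prod_compl S (fun x => w x (C x))]
    apply mul_le_mul_of_nonneg_right
    · calc ∏ x ∈ S, w x (C x) ≤ ∏ x ∈ S, q :=
            Finset.prod_le_prod (fun x _ => hw0 x _) (fun x _ => hwq x _)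
        _ = q ^ S.card := Finset.prod_const q
    · exact Finset.prod_nonneg fun x _ => hw0 x _
  have hstep2 : ∑ C ∈ E, G C ≤ 1 := by
    set φ : (X → Bool) → (X → Bool) := fun C x => if x ∈ S then false else C x with hφ
    have hGφ : ∀ C, G (φ C) = G C := by
      intro C
      refine Finset.prod_congr rfl fun x hx => ?_
      rw [Finset.mem_compl] at hx
      simp [hφ, hx]
    have hinj : ∀ C ∈ E, ∀ C' ∈ E, φ C = φ C' → C = C' := by
      intro C hC C' hC' hcc
      have hCinv : ∀ x, C (g x) = C x := (Finset.mem_filter.1 hC).2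
      have hC'inv : ∀ x, C' (g x) = C' x := (Finset.mem_filter.1 hC').2
      funext x
      by_cases hx : x ∈ S
      · have h1 : C x = C (g⁻¹ x) := by
          have := hCinv (g⁻¹ x); rw [← Equiv.Perm.mul_apply, mul_inv_cancel, Equiv.Perm.one_apply] at this; exact this
        have h2 : C' x = C' (g⁻¹ x) := by
          have := hC'inv (g⁻¹ x); rw [← Equiv.Perm.mul_apply, mul_inv_cancel, Equiv.Perm.one_apply] at this; exact this
        have hgx : g⁻¹ x ∉ S := hS x hx
        have := congrFun hcc (g⁻¹ x)
        simp only [hφ, if_neg hgx] at this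
        rw [h1, h2, this]
      · have := congrFun hcc x
        simp only [hφ, if_neg hx] at this
        exact this
    have himg : ∑ C ∈ E, G C = ∑ B ∈ E.image φ, G B := by
      rw [Finset.sum_image hinj]
      exact Finset.sum_congr rfl fun C _ => (hGφ C).symm
    set u : X → Bool → ℝ := fun x b => if x ∈ S then (if b then 0 else 1) else w x b with hu
    have hu0 : ∀ x b, 0 ≤ u x b := by
      intro x b
      simp only [hu]
      split
      · split <;> norm_num
      · exact hw0 x b
    have himgval : ∀ B ∈ E.image φ, G B = ∏ x, u x (B x) := by
      intro B hB
      obtain ⟨C, _, rfl⟩ := Finset.mem_image.1 hB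
      rw [← Finset.prod_mul_prod_compl S (fun x => u x (φ C x))]
      have h1 : ∏ x ∈ S, u x (φ C x) = 1 := by
        apply Finset.prod_eq_one
        intro x hx
        simp [hu, hφ, hx]
      have h2 : ∏ x ∈ Sᶜ, u x (φ C x) = G (φ C) := by
        refine Finset.prod_congr rfl fun x hx => ?_
        rw [Finset.mem_compl] at hx
        simp [hu, hx]
      rw [h1, h2, one_mul, hGφ]
    calc ∑ C ∈ E, G C = ∑ B ∈ E.image φ, ∏ x, u x (B x) := by
          rw [himg]; exact Finset.sum_congr rfl himgval
      _ ≤ ∑ B : X → Bool, ∏ x, u x (B x) := by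
          apply Finset.sum_le_sum_of_subset_of_nonneg (Finset.subset_univ _)
          intro B _ _
          exact Finset.prod_nonneg fun x _ => hu0 x _
      _ = ∏ x, (u x true + u x false) := sum_prod_fun u
      _ = 1 := by
          apply Finset.prod_eq_one
          intro x _
          by_cases hx : x ∈ S <;> simp [hu, hx, hw1 x]
  calc ∑ C ∈ E, ∏ x, w x (C x) ≤ ∑ C ∈ E, q ^ S.card * G C := Finset.sum_le_sum hstep1
    _ = q ^ S.card * ∑ C ∈ E, G C := by rw [Finset.mul_sum]
    _ ≤ q ^ S.card * 1 := by
        apply mul_le_mul_of_nonneg_left hstep2 (pow_nonneg hq0 _)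
    _ = q ^ S.card := mul_one _
lemma matProb_eq_prod_s9 {N : ℕ} (p : ℝ) (A : Fin N → Fin N → Bool) :
    matProb N p A = ∏ x : Fin N × Fin N, (if A x.1 x.2 then p else 1 - p) := by
  classical
  rw [Finset.prod_ite, Finset.prod_const, Finset.prod_const]
  have hcard : (univ.filter fun x : Fin N × Fin N => ¬ (A x.1 x.2 = true)).card
      = N ^ 2 - edgeCount A := by
    have h := Finset.card_filter_add_card_filter_not
      (s := (univ : Finset (Fin N × Fin N))) (p := fun x => A x.1 x.2 = true)
    have hu : (univ : Finset (Fin N × Fin N)).card = N ^ 2 := by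
      simp [Finset.card_univ, sq]
    rw [hu] at h
    have : edgeCount A ≤ N ^ 2 := by
      rw [← hu]; exact Finset.card_filter_le _ _
    unfold edgeCount at *
    omega
  rw [hcard]
  rfl

lemma matProb_nonneg {N : ℕ} {p : ℝ} (hp0 : 0 ≤ p) (hp1 : p ≤ 1) (A : Fin N → Fin N → Bool) :
    0 ≤ matProb N p A :=
  mul_nonneg (pow_nonneg hp0 _) (pow_nonneg (by linarith) _)

lemma invSum_le {N : ℕ} {p : ℝ} (hp0 : 0 < p) (hp1 : p < 1)
    (σ τ : Equiv.Perm (Fin N)) :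
    (∑ A : Fin N → Fin N → Bool, if ∀ i j, A (σ i) (τ j) = A i j then matProb N p A else 0)
      ≤ (max p (1 - p)) ^ ((((σ.support.card + τ.support.card) * N : ℕ) : ℝ) / 6) := by
  classical
  set q := max p (1 - p) with hq
  have hq0 : 0 < q := lt_max_of_lt_left hp0
  have hq1 : q < 1 := by
    rw [hq, max_lt_iff]; constructor <;> linarith
  set gp : Equiv.Perm (Fin N × Fin N) := Equiv.prodCongr σ τ with hgp
  obtain ⟨S, hSind, hScard⟩ := exists_indep gp
  set w : (Fin N × Fin N) → Bool → ℝ := fun _ b => if b then p else 1 - p with hw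
  -- transfer the sum
  have htrans : (∑ A : Fin N → Fin N → Bool,
        if ∀ i j, A (σ i) (τ j) = A i j then matProb N p A else 0)
      = ∑ C : Fin N × Fin N → Bool,
        if ∀ x, C (gp x) = C x then ∏ x, w x (C x) else 0 := by
    refine Fintype.sum_equiv (Equiv.curry (Fin N) (Fin N) Bool).symm
      (fun A => if ∀ i j, A (σ i) (τ j) = A i j then matProb N p A else 0)
      (fun C => if ∀ x, C (gp x) = C x then ∏ x, w x (C x) else 0)
      (fun A => ?_)
    refine if_congr ?_ ?_ rfl
    · constructor
      · intro h x
        exact h x.1 x.2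
      · intro h i j
        exact h (i, j)
    · rw [matProb_eq_prod_s9]
      rfl
  rw [htrans]
  have hle := sum_invariant_le w q hq0.le
    (fun x b => by by_cases hb : b <;> simp [hw, hb] <;> linarith)
    (fun x b => by by_cases hb : b <;> simp [hw, hb, hq, le_max_iff] <;> linarith)
    (fun x => by simp [hw])
    gp S hSind
  refine hle.trans ?_
  -- exponent comparison
  have hkey : (((σ.support.card + τ.support.card) * N : ℕ) : ℝ) / 6 ≤ (S.card : ℝ) := by
    set a := σ.support.card
    set b := τ.support.card
    have ha : a ≤ N := by simpa using Finset.card_le_univ σ.support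
    have hb : b ≤ N := by simpa using Finset.card_le_univ τ.support
    -- card of fixed points
    have hfix : (univ.filter fun x : Fin N × Fin N => gp x = x).card = (N - a) * (N - b) := by
      have h1 : (univ.filter fun x : Fin N × Fin N => gp x = x)
          = (univ.filter fun i : Fin N => σ i = i) ×ˢ (univ.filter fun j : Fin N => τ j = j) := by
        rw [← Finset.filter_product]
        rw [Finset.univ_product_univ]
        refine Finset.filter_congr fun x _ => ?_
        simp [hgp, Equiv.prodCongr_apply, Prod.ext_iff]
      rw [h1, Finset.card_product]
      have h2 : (univ.filter fun i : Fin N => σ i = i) = σ.supportᶜ := by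
        ext i; simp [Equiv.Perm.mem_support]
      have h3 : (univ.filter fun j : Fin N => τ j = j) = τ.supportᶜ := by
        ext j; simp [Equiv.Perm.mem_support]
      rw [h2, h3, Finset.card_compl, Finset.card_compl]
      simp
      rfl
    have hsplit : (univ.filter fun x : Fin N × Fin N => gp x = x).card
        + (univ.filter fun x : Fin N × Fin N => ¬ gp x = x).card = N * N := by
      rw [Finset.card_filter_add_card_filter_not]
      simp [Finset.card_univ]
    have hDeq : (univ.filter fun x : Fin N × Fin N => gp x ≠ x).card = N * N - (N - a) * (N - b) := by
      have : (univ.filter fun x : Fin N × Fin N => gp x ≠ x)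
          = (univ.filter fun x : Fin N × Fin N => ¬ gp x = x) := rfl
      rw [this]
      omega
    rw [hDeq] at hScard
    have hab : (N - a) * (N - b) ≤ N * N := Nat.mul_le_mul (by omega) (by omega)
    have hcast : ((N * N - (N - a) * (N - b) : ℕ) : ℝ)
        = (N : ℝ) * N - ((N : ℝ) - a) * ((N : ℝ) - b) := by
      push_cast [Nat.cast_sub hab, Nat.cast_sub ha, Nat.cast_sub hb]
      ring
    have hScard' : (( N * N - (N - a) * (N - b) : ℕ) : ℝ) ≤ 3 * S.card := by
      exact_mod_cast hScard
    rw [hcast] at hScard'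
    have haN : (a : ℝ) * b ≤ (a : ℝ) * N := by
      apply mul_le_mul_of_nonneg_left _ (by positivity)
      exact_mod_cast hb
    have hbN : (a : ℝ) * b ≤ (b : ℝ) * N := by
      rw [mul_comm]
      apply mul_le_mul_of_nonneg_left _ (by positivity)
      exact_mod_cast ha
    push_cast
    nlinarith [hScard', haN, hbN]
  calc q ^ S.card = q ^ ((S.card : ℕ) : ℝ) := by rw [Real.rpow_natCast]
    _ ≤ q ^ ((((σ.support.card + τ.support.card) * N : ℕ) : ℝ) / 6) :=
        Real.rpow_le_rpow_of_exponent_ge hq0 hq1.le hkey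

lemma card_support_eq_le (N a : ℕ) :
    (univ.filter fun σ : Equiv.Perm (Fin N) => σ.support.card = a).card ≤ N ^ a * N ^ a := by
  classical
  have hsub : (univ.filter fun σ : Equiv.Perm (Fin N) => σ.support.card = a)
      ⊆ (Finset.powersetCard a (univ : Finset (Fin N))).biUnion
          (fun s => univ.filter fun σ : Equiv.Perm (Fin N) => σ.support = s) := by
    intro σ hσ
    rw [Finset.mem_filter] at hσ
    rw [Finset.mem_biUnion]
    exact ⟨σ.support, Finset.mem_powersetCard.2 ⟨Finset.subset_univ _, hσ.2⟩,
      Finset.mem_filter.2 ⟨Finset.mem_univ _, rfl⟩⟩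
  have hper : ∀ s ∈ Finset.powersetCard a (univ : Finset (Fin N)),
      (univ.filter fun σ : Equiv.Perm (Fin N) => σ.support = s).card ≤ N ^ a := by
    intro s hs
    have hsc : s.card = a := (Finset.mem_powersetCard.1 hs).2
    have : (univ.filter fun σ : Equiv.Perm (Fin N) => σ.support = s).card
        ≤ (univ : Finset (↥s → Fin N)).card := by
      apply Finset.card_le_card_of_injOn (fun σ => fun x : ↥s => σ ↑x)
        (fun _ _ => Finset.mem_univ _)
      intro σ hσ σ' hσ' hfe
      simp only [Finset.coe_filter, Set.mem_setOf_eq, Finset.mem_univ, true_and] at hσ hσ'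
      apply Equiv.ext
      intro x
      by_cases hx : x ∈ s
      · exact congrFun hfe ⟨x, hx⟩
      · have h1 : σ x = x := by
          rw [← Equiv.Perm.notMem_support, hσ]; exact hx
        have h2 : σ' x = x := by
          rw [← Equiv.Perm.notMem_support, hσ']; exact hx
        rw [h1, h2]
    refine this.trans ?_
    rw [Finset.card_univ, Fintype.card_fun]
    simp [hsc]
  calc (univ.filter fun σ : Equiv.Perm (Fin N) => σ.support.card = a).card
      ≤ _ := Finset.card_le_card hsub
    _ ≤ ∑ s ∈ Finset.powersetCard a (univ : Finset (Fin N)),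
        (univ.filter fun σ : Equiv.Perm (Fin N) => σ.support = s).card := Finset.card_biUnion_le
    _ ≤ ∑ _s ∈ Finset.powersetCard a (univ : Finset (Fin N)), N ^ a := Finset.sum_le_sum hper
    _ = (Finset.powersetCard a (univ : Finset (Fin N))).card * N ^ a := by
        rw [Finset.sum_const, smul_eq_mul]
    _ ≤ N ^ a * N ^ a := by
        apply Nat.mul_le_mul_right
        rw [Finset.card_powersetCard, Finset.card_univ, Fintype.card_fin]
        exact Nat.choose_le_pow N a

lemma card_fiber_le (N j : ℕ) :
    (univ.filter fun στ : Equiv.Perm (Fin N) × Equiv.Perm (Fin N) =>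
      στ.1.support.card + στ.2.support.card = j).card ≤ (j + 1) * (N ^ j * N ^ j) := by
  classical
  have hsub : (univ.filter fun στ : Equiv.Perm (Fin N) × Equiv.Perm (Fin N) =>
        στ.1.support.card + στ.2.support.card = j)
      ⊆ (Finset.HasAntidiagonal.antidiagonal j).biUnion (fun ab =>
        univ.filter fun στ : Equiv.Perm (Fin N) × Equiv.Perm (Fin N) =>
          στ.1.support.card = ab.1 ∧ στ.2.support.card = ab.2) := by
    intro στ hστ
    rw [Finset.mem_filter] at hστ
    rw [Finset.mem_biUnion]
    exact ⟨(στ.1.support.card, στ.2.support.card),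
      Finset.HasAntidiagonal.mem_antidiagonal.2 hστ.2, Finset.mem_filter.2 ⟨Finset.mem_univ _, rfl, rfl⟩⟩
  have hper : ∀ ab ∈ Finset.HasAntidiagonal.antidiagonal j,
      (univ.filter fun στ : Equiv.Perm (Fin N) × Equiv.Perm (Fin N) =>
        στ.1.support.card = ab.1 ∧ στ.2.support.card = ab.2).card ≤ N ^ j * N ^ j := by
    rintro ⟨a, b⟩ hab
    have hj : a + b = j := Finset.HasAntidiagonal.mem_antidiagonal.1 hab
    have heq : (univ.filter fun στ : Equiv.Perm (Fin N) × Equiv.Perm (Fin N) =>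
          στ.1.support.card = a ∧ στ.2.support.card = b)
        = (univ.filter fun σ : Equiv.Perm (Fin N) => σ.support.card = a) ×ˢ
          (univ.filter fun τ : Equiv.Perm (Fin N) => τ.support.card = b) := by
      rw [← Finset.filter_product, Finset.univ_product_univ]
    rw [heq, Finset.card_product]
    calc _ ≤ (N ^ a * N ^ a) * (N ^ b * N ^ b) :=
          Nat.mul_le_mul (card_support_eq_le N a) (card_support_eq_le N b)
      _ = N ^ j * N ^ j := by rw [← hj]; ring
  calc _ ≤ _ := Finset.card_le_card hsub
    _ ≤ ∑ ab ∈ Finset.HasAntidiagonal.antidiagonal j, (univ.filter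
        fun στ : Equiv.Perm (Fin N) × Equiv.Perm (Fin N) =>
          στ.1.support.card = ab.1 ∧ στ.2.support.card = ab.2).card := Finset.card_biUnion_le
    _ ≤ ∑ _ab ∈ Finset.HasAntidiagonal.antidiagonal j, N ^ j * N ^ j := Finset.sum_le_sum hper
    _ = (j + 1) * (N ^ j * N ^ j) := by
        rw [Finset.sum_const, smul_eq_mul, Finset.Nat.card_antidiagonal]
lemma union_bound {N : ℕ} {p : ℝ} (hp0 : 0 < p) (hp1 : p < 1) :
    symProbU N p ≤ ∑ στ ∈ (univ.filter fun στ : Equiv.Perm (Fin N) × Equiv.Perm (Fin N) => στ ≠ (1, 1)),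
      ∑ A : Fin N → Fin N → Bool,
        if ∀ i j, A (στ.1 i) (στ.2 j) = A i j then matProb N p A else 0 := by
  classical
  rw [symProbU, Finset.sum_comm]
  apply Finset.sum_le_sum
  intro A _
  by_cases hA : ∃ στ : Equiv.Perm (Fin N) × Equiv.Perm (Fin N),
      στ ≠ (1, 1) ∧ ∀ i j, A (στ.1 i) (στ.2 j) = A i j
  · obtain ⟨στ₀, hne, hinv⟩ := hA
    rw [if_pos ⟨στ₀, hne, hinv⟩]
    have h0 : matProb N p A
        = (if ∀ i j, A (στ₀.1 i) (στ₀.2 j) = A i j then matProb N p A else 0) := by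
      rw [if_pos hinv]
    refine le_trans (le_of_eq h0) (Finset.single_le_sum
      (f := fun στ : Equiv.Perm (Fin N) × Equiv.Perm (Fin N) =>
        if ∀ i j, A (στ.1 i) (στ.2 j) = A i j then matProb N p A else 0) ?_ ?_)
    · intro στ _
      split
      · exact matProb_nonneg hp0.le hp1.le A
      · exact le_refl 0
    · exact Finset.mem_filter.2 ⟨Finset.mem_univ _, hne⟩
  · rw [if_neg hA]
    apply Finset.sum_nonneg
    intro στ _
    split
    · exact matProb_nonneg hp0.le hp1.le A
    · exact le_refl 0

lemma symProbU_le_grouped {N : ℕ} {p : ℝ} (hp0 : 0 < p) (hp1 : p < 1) :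
    symProbU N p ≤ ∑ j ∈ Finset.Icc 2 (2 * N),
      (((j + 1) * (N ^ j * N ^ j) : ℕ) : ℝ) * (max p (1 - p)) ^ (((j * N : ℕ) : ℝ) / 6) := by
  classical
  set q := max p (1 - p) with hq
  have hq0 : 0 < q := lt_max_of_lt_left hp0
  set m : Equiv.Perm (Fin N) × Equiv.Perm (Fin N) → ℕ :=
    fun στ => στ.1.support.card + στ.2.support.card with hm
  set P := univ.filter fun στ : Equiv.Perm (Fin N) × Equiv.Perm (Fin N) => στ ≠ (1, 1) with hP
  set f : Equiv.Perm (Fin N) × Equiv.Perm (Fin N) → ℝ :=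
    fun στ => q ^ (((m στ * N : ℕ) : ℝ) / 6) with hf
  have h1 : symProbU N p ≤ ∑ στ ∈ P, f στ := by
    refine (union_bound hp0 hp1).trans (Finset.sum_le_sum fun στ _ => ?_)
    exact invSum_le hp0 hp1 στ.1 στ.2
  have hmaps : ∀ στ ∈ P, m στ ∈ Finset.Icc 2 (2 * N) := by
    intro στ hστ
    rw [hP, Finset.mem_filter] at hστ
    have hne := hστ.2
    rw [Finset.mem_Icc]
    constructor
    · by_cases h1' : στ.1 = 1
      · have h2' : στ.2 ≠ 1 := by
          intro h2
          exact hne (Prod.ext h1' h2)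
        have := Equiv.Perm.two_le_card_support_of_ne_one h2'
        simp only [hm]
        omega
      · have := Equiv.Perm.two_le_card_support_of_ne_one h1'
        simp only [hm]
        omega
    · have ha : στ.1.support.card ≤ N := by simpa using Finset.card_le_univ στ.1.support
      have hb : στ.2.support.card ≤ N := by simpa using Finset.card_le_univ στ.2.support
      simp only [hm]
      omega
  have h2 : ∑ στ ∈ P, f στ
      = ∑ j ∈ Finset.Icc 2 (2 * N), ∑ στ ∈ P.filter (fun στ => m στ = j), f στ :=
    (Finset.sum_fiberwise_of_maps_to hmaps f).symm
  have h3 : ∀ j ∈ Finset.Icc 2 (2 * N), ∑ στ ∈ P.filter (fun στ => m στ = j), f στ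
      ≤ (((j + 1) * (N ^ j * N ^ j) : ℕ) : ℝ) * q ^ (((j * N : ℕ) : ℝ) / 6) := by
    intro j _
    have hval : ∀ στ ∈ P.filter (fun στ => m στ = j), f στ = q ^ (((j * N : ℕ) : ℝ) / 6) := by
      intro στ hστ
      have : m στ = j := (Finset.mem_filter.1 hστ).2
      rw [hf]
      simp only
      rw [this]
    rw [Finset.sum_congr rfl hval, Finset.sum_const, nsmul_eq_mul]
    apply mul_le_mul_of_nonneg_right _ (Real.rpow_nonneg hq0.le _)
    have hcard : (P.filter (fun στ => m στ = j)).card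
        ≤ (univ.filter fun στ : Equiv.Perm (Fin N) × Equiv.Perm (Fin N) =>
            στ.1.support.card + στ.2.support.card = j).card := by
      apply Finset.card_le_card
      intro στ hστ
      rw [Finset.mem_filter] at hστ ⊢
      exact ⟨Finset.mem_univ _, hστ.2⟩
    have := hcard.trans (card_fiber_le N j)
    exact_mod_cast this
  exact h1.trans (h2 ▸ Finset.sum_le_sum h3)

lemma symProbU_nonneg {N : ℕ} {p : ℝ} (hp0 : 0 ≤ p) (hp1 : p ≤ 1) : 0 ≤ symProbU N p := by
  apply Finset.sum_nonneg
  intro A _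
  split
  · exact matProb_nonneg hp0 hp1 A
  · exact le_refl 0


/-- Appendix, Lemma 10: under `N·p(N)/ln N → ∞` and `N·(1−p(N))/ln N → ∞`, a random
unlabeled bipartite graph is symmetric with probability `O(N^{−w})` for every positive
constant `w`: indeed `N^w · Sym_u(N) → 0`. -/
theorem unlabeled_symmetry_rare (p : ℕ → ℝ)
    (hp : ∀ N, 0 < p N ∧ p N < 1)
    (hgrow : Filter.Tendsto (fun N : ℕ => (N : ℝ) * p N / Real.log N)
      Filter.atTop Filter.atTop)
    (hgrow' : Filter.Tendsto (fun N : ℕ => (N : ℝ) * (1 - p N) / Real.log N)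
      Filter.atTop Filter.atTop) :
    ∀ w : ℝ, 0 < w →
      Filter.Tendsto (fun N : ℕ => (N : ℝ) ^ w * symProbU N (p N))
        Filter.atTop (nhds 0) := by
  intro w hw
  have key : ∀ᶠ N : ℕ in Filter.atTop, (N : ℝ) ^ w * symProbU N (p N) ≤ 8 / N := by
    filter_upwards [hgrow.eventually_ge_atTop (6 * (w + 7)),
      hgrow'.eventually_ge_atTop (6 * (w + 7)), Filter.eventually_ge_atTop 2] with N hg hg' hN2
    have hp0 := (hp N).1
    have hp1 := (hp N).2
    set q := max (p N) (1 - p N) with hqdef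
    have hq0 : 0 < q := lt_max_of_lt_left hp0
    have hq1 : q < 1 := by rw [hqdef, max_lt_iff]; constructor <;> linarith
    have hN1 : (1 : ℝ) < N := by exact_mod_cast Nat.lt_of_lt_of_le one_lt_two hN2
    have hN0 : (0 : ℝ) < N := lt_trans one_pos hN1
    have hlogN : 0 < Real.log N := Real.log_pos hN1
    have hNp : 6 * (w + 7) * Real.log N ≤ (N : ℝ) * p N := (le_div_iff₀ hlogN).1 hg
    have hNp' : 6 * (w + 7) * Real.log N ≤ (N : ℝ) * (1 - p N) := (le_div_iff₀ hlogN).1 hg'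
    have hmin : 6 * (w + 7) * Real.log N ≤ (N : ℝ) * (1 - q) := by
      rcases max_cases (p N) (1 - p N) with ⟨he, _⟩ | ⟨he, _⟩ <;> rw [hqdef, he] <;> nlinarith
    set r := q ^ ((N : ℝ) / 6) with hrdef
    have hr0 : 0 ≤ r := Real.rpow_nonneg hq0.le _
    have hrle : r ≤ (N : ℝ) ^ (-(w + 7)) := by
      rw [hrdef, Real.rpow_def_of_pos hq0, Real.rpow_def_of_pos hN0]
      apply Real.exp_le_exp.2
      have hlogq : Real.log q ≤ q - 1 := Real.log_le_sub_one_of_pos hq0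
      have h1 : ((N : ℝ) / 6) * Real.log q ≤ ((N : ℝ) / 6) * (q - 1) :=
        mul_le_mul_of_nonneg_left hlogq (by positivity)
      have h2 : ((N : ℝ) / 6) * (q - 1) = -((N : ℝ) * (1 - q)) / 6 := by ring
      linarith
    set x := 2 * (N : ℝ) ^ 2 * r with hxdef
    have hx0 : 0 ≤ x := by positivity
    have hx1 : x ≤ 2 * (N : ℝ) ^ (-(w + 5) : ℝ) := by
      have hm : (N : ℝ) ^ 2 * r ≤ (N : ℝ) ^ 2 * (N : ℝ) ^ (-(w + 7)) :=
        mul_le_mul_of_nonneg_left hrle (by positivity)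
      have heq : (N : ℝ) ^ (2 : ℕ) * (N : ℝ) ^ (-(w + 7) : ℝ) = (N : ℝ) ^ (-(w + 5) : ℝ) := by
        rw [← Real.rpow_natCast (N : ℝ) 2, ← Real.rpow_add hN0]
        congr 1
        push_cast
        ring
      rw [hxdef]
      rw [heq] at hm
      linarith
    have hxle : x ≤ 1 := by
      have h5 : (N : ℝ) ^ (-(w + 5) : ℝ) ≤ (N : ℝ) ^ (-1 : ℝ) :=
        Real.rpow_le_rpow_of_exponent_le hN1.le (by linarith)
      have h6 : (N : ℝ) ^ (-1 : ℝ) = 1 / N := by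
        rw [Real.rpow_neg_one, one_div]
      have : (2 : ℝ) / N ≤ 1 := by
        rw [div_le_one hN0]
        exact_mod_cast hN2
      calc x ≤ 2 * (N : ℝ) ^ (-(w + 5) : ℝ) := hx1
        _ ≤ 2 * (1 / N) := by linarith [mul_le_mul_of_nonneg_left (h5.trans_eq h6) (by norm_num : (0:ℝ) ≤ 2)]
        _ ≤ 1 := by rw [mul_one_div]; exact this
    -- bound symProbU
    have hsym : symProbU N (p N) ≤ (2 * N) * x ^ 2 := by
      refine (symProbU_le_grouped hp0 hp1).trans ?_
      have hterm : ∀ j ∈ Finset.Icc 2 (2 * N),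
          (((j + 1) * (N ^ j * N ^ j) : ℕ) : ℝ) * q ^ (((j * N : ℕ) : ℝ) / 6) ≤ x ^ 2 := by
        intro j hj
        have hj2 : 2 ≤ j := (Finset.mem_Icc.1 hj).1
        have hqpow : q ^ (((j * N : ℕ) : ℝ) / 6) = r ^ j := by
          rw [hrdef, ← Real.rpow_natCast (q ^ ((N : ℝ) / 6)) j, ← Real.rpow_mul hq0.le]
          congr 1
          push_cast
          ring
        rw [hqpow]
        have h2j : ((j : ℝ) + 1) ≤ 2 ^ j := by
          exact_mod_cast Nat.succ_le_of_lt (Nat.lt_two_pow_self (n := j))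
        have hstep : (((j + 1) * (N ^ j * N ^ j) : ℕ) : ℝ) * r ^ j ≤ x ^ j := by
          push_cast
          calc ((j : ℝ) + 1) * ((N : ℝ) ^ j * (N : ℝ) ^ j) * r ^ j
              ≤ 2 ^ j * ((N : ℝ) ^ j * (N : ℝ) ^ j) * r ^ j := by
                apply mul_le_mul_of_nonneg_right
                  (mul_le_mul_of_nonneg_right h2j (by positivity)) (pow_nonneg hr0 j)
            _ = x ^ j := by rw [hxdef]; ring
        exact hstep.trans (pow_le_pow_of_le_one hx0 hxle hj2)
      calc ∑ j ∈ Finset.Icc 2 (2 * N),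
            (((j + 1) * (N ^ j * N ^ j) : ℕ) : ℝ) * q ^ (((j * N : ℕ) : ℝ) / 6)
          ≤ ∑ _j ∈ Finset.Icc 2 (2 * N), x ^ 2 := Finset.sum_le_sum hterm
        _ = (Finset.Icc 2 (2 * N)).card * x ^ 2 := by rw [Finset.sum_const, nsmul_eq_mul]
        _ ≤ (2 * N) * x ^ 2 := by
            apply mul_le_mul_of_nonneg_right _ (by positivity)
            have hcard : (Finset.Icc 2 (2 * N)).card ≤ 2 * N := by
              rw [Nat.card_Icc]; omega
            exact_mod_cast hcard
    -- final chain
    have hx2 : x ^ 2 ≤ 4 * (N : ℝ) ^ (-2 * w - 10 : ℝ) := by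
      have := pow_le_pow_left₀ hx0 hx1 2
      have heq : (2 * (N : ℝ) ^ (-(w + 5) : ℝ)) ^ 2 = 4 * (N : ℝ) ^ (-2 * w - 10 : ℝ) := by
        rw [mul_pow, ← Real.rpow_natCast ((N : ℝ) ^ (-(w + 5) : ℝ)) 2, ← Real.rpow_mul hN0.le]
        norm_num
        ring_nf
      rw [heq] at this
      exact this
    calc (N : ℝ) ^ w * symProbU N (p N) ≤ (N : ℝ) ^ w * ((2 * N) * x ^ 2) := by
          apply mul_le_mul_of_nonneg_left hsym (Real.rpow_nonneg hN0.le w)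
      _ ≤ (N : ℝ) ^ w * ((2 * N) * (4 * (N : ℝ) ^ (-2 * w - 10 : ℝ))) := by
          apply mul_le_mul_of_nonneg_left _ (Real.rpow_nonneg hN0.le w)
          apply mul_le_mul_of_nonneg_left hx2 (by positivity)
      _ = 8 * ((N : ℝ) ^ w * (N : ℝ) ^ (1 : ℝ) * (N : ℝ) ^ (-2 * w - 10 : ℝ)) := by
          rw [Real.rpow_one]; ring
      _ = 8 * (N : ℝ) ^ (w + 1 + (-2 * w - 10) : ℝ) := by
          rw [← Real.rpow_add hN0, ← Real.rpow_add hN0]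
      _ ≤ 8 * (N : ℝ) ^ (-1 : ℝ) := by
          apply mul_le_mul_of_nonneg_left _ (by norm_num)
          apply Real.rpow_le_rpow_of_exponent_le hN1.le
          linarith
      _ = 8 / N := by rw [Real.rpow_neg_one, div_eq_mul_inv]
  have hnonneg : ∀ᶠ N : ℕ in Filter.atTop, 0 ≤ (N : ℝ) ^ w * symProbU N (p N) := by
    filter_upwards with N
    exact mul_nonneg (Real.rpow_nonneg (Nat.cast_nonneg N) w)
      (symProbU_nonneg (hp N).1.le (hp N).2.le)
  exact squeeze_zero' hnonneg key (tendsto_const_div_atTop_nhds_zero_nat 8)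
end
end
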